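/- arXiv:1802.03695 — 2 statements merged into one kernel-verified Lean document; each statement's English description precedes it below -/
import Mathlib

section
/- Let f = (1+X+X²)·(1+X²)⁻¹ ∈ (ZMod 2)⟦X⟧. For all polynomials p, q ∈ (ZMod 2)[Y], if X·p(f) + (1+X)·q(f) = 0 in (ZMod 2)⟦X⟧ (where p(f), q(f) denote the evaluations of p and q at the power series f), then p = 0 and q = 0. -/
open PowerSeries

noncomputable section

/-- The multiplier `f = (1+X+X²)·(1+X²)⁻¹` in `(ZMod 2)⟦X⟧`. -/
def f : PowerSeries (ZMod 2) := (1 + X + X ^ 2) * (1 + X ^ 2)⁻¹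

namespace IndepAux

abbrev K := ZMod 2

def A : (Polynomial K) := 1 + Polynomial.X + Polynomial.X ^ 2
def B : (Polynomial K) := 1 + Polynomial.X ^ 2

def S (n : ℕ) (p : (Polynomial K)) : (Polynomial K) :=
  ∑ i ∈ Finset.range (n + 1), Polynomial.C (p.coeff i) * A ^ i * B ^ (n - i)

lemma eval_one_S (n : ℕ) (p : (Polynomial K)) : (S n p).eval 1 = p.coeff n := by
  have hA : A.eval 1 = 1 := by simp [A]; decide
  have hB : B.eval 1 = 0 := by simp [B]; decide
  rw [S, Polynomial.eval_finset_sum, Finset.sum_range_succ]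
  rw [Finset.sum_eq_zero, zero_add]
  · simp [hA, hB]
  · intro i hi
    rw [Finset.mem_range] at hi
    simp [hA, hB, zero_pow (show n - i ≠ 0 by omega)]

lemma S_factor (n : ℕ) (p : (Polynomial K)) (hp : p.coeff (n + 1) = 0) :
    S (n + 1) p = B * S n p := by
  rw [S, Finset.sum_range_succ, hp, S, Finset.mul_sum]
  simp only [map_zero, zero_mul, add_zero]
  apply Finset.sum_congr rfl
  intro i hi
  rw [Finset.mem_range] at hi
  have h1 : n + 1 - i = (n - i) + 1 := by omega
  rw [h1, pow_succ]
  ring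

lemma charpoly2 : ∀ a b : (Polynomial K), a + b = 0 ↔ a = b := by
  intro a b
  rw [CharTwo.add_eq_iff_eq_add, zero_add]

lemma onePlusX_ne : (1 + Polynomial.X : (Polynomial K)) ≠ 0 := by
  intro h
  have := congrArg (Polynomial.coeff · 0) h
  simp at this

lemma hB2 : B = (1 + Polynomial.X : (Polynomial K)) ^ 2 := by
  rw [B, CharTwo.add_sq, one_pow]

lemma key (n : ℕ) : ∀ p q : (Polynomial K), (∀ i, n < i → p.coeff i = 0) →
    (∀ i, n < i → q.coeff i = 0) →
    Polynomial.X * S n p + (1 + Polynomial.X) * S n q = 0 → p = 0 ∧ q = 0 := by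
  induction n with
  | zero =>
    intro p q hp hq h
    have hpc : p.coeff 0 = 0 := by
      have h1 := congrArg (Polynomial.eval 1) h
      simpa [eval_one_S, show (1 + 1 : K) = 0 from rfl] using h1
    have hS0p : S 0 p = 0 := by simp [S, hpc]
    rw [hS0p, mul_zero, zero_add] at h
    have hqc : q.coeff 0 = 0 := by
      rcases mul_eq_zero.mp h with h' | h'
      · exact absurd h' onePlusX_ne
      · simpa [S, Polynomial.C_eq_zero] using h'
    constructor
    · ext i
      rcases Nat.eq_zero_or_pos i with rfl | hi
      · simpa using hpc
      · simpa using hp i hi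
    · ext i
      rcases Nat.eq_zero_or_pos i with rfl | hi
      · simpa using hqc
      · simpa using hq i hi
  | succ n ih =>
    intro p q hp hq h
    have hpc : p.coeff (n + 1) = 0 := by
      have h1 := congrArg (Polynomial.eval 1) h
      simpa [eval_one_S, show (1 + 1 : K) = 0 from rfl] using h1
    rw [S_factor n p hpc, charpoly2] at h
    have h' : (1 + Polynomial.X) * S (n + 1) q
        = (1 + Polynomial.X) * (Polynomial.X * (1 + Polynomial.X) * S n p) := by
      rw [← h, hB2]; ring
    have hq' : S (n + 1) q = Polynomial.X * (1 + Polynomial.X) * S n p :=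
      mul_left_cancel₀ onePlusX_ne h'
    have hqc : q.coeff (n + 1) = 0 := by
      have h1 := congrArg (Polynomial.eval 1) hq'
      simpa [eval_one_S, show (1 + 1 : K) = 0 from rfl] using h1
    rw [S_factor n q hqc, hB2] at hq'
    have h2 : (1 + Polynomial.X) * ((1 + Polynomial.X) * S n q)
        = (1 + Polynomial.X) * (Polynomial.X * S n p) := by
      rw [show (1 + Polynomial.X) * ((1 + Polynomial.X) * S n q)
          = (1 + Polynomial.X) ^ 2 * S n q by ring, hq']
      ring
    have h3 : (1 + Polynomial.X) * S n q = Polynomial.X * S n p :=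
      mul_left_cancel₀ onePlusX_ne h2
    refine ih p q ?_ ?_ ?_
    · intro i hi
      rcases eq_or_lt_of_le (Nat.succ_le_of_lt hi) with h4 | h4
      · rw [← h4]; exact hpc
      · exact hp i h4
    · intro i hi
      rcases eq_or_lt_of_le (Nat.succ_le_of_lt hi) with h4 | h4
      · rw [← h4]; exact hqc
      · exact hq i h4
    · rw [charpoly2]; exact h3.symm

lemma f_mul : f * (1 + X ^ 2 : PowerSeries K) = (1 + X + X ^ 2) := by
  rw [f, mul_assoc, PowerSeries.inv_mul_cancel, mul_one]
  simp

lemma pow_mul_f_pow (n i : ℕ) (hi : i ≤ n) :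
    (1 + X ^ 2 : PowerSeries K) ^ n * f ^ i = (1 + X + X ^ 2) ^ i * (1 + X ^ 2) ^ (n - i) := by
  have h1 : (1 + X ^ 2 : PowerSeries K) ^ n = (1 + X ^ 2) ^ i * (1 + X ^ 2) ^ (n - i) := by
    rw [← pow_add]; congr 1; omega
  calc (1 + X ^ 2 : PowerSeries K) ^ n * f ^ i
      = (f * (1 + X ^ 2)) ^ i * (1 + X ^ 2) ^ (n - i) := by rw [h1, mul_pow]; ring
    _ = (1 + X + X ^ 2) ^ i * (1 + X ^ 2) ^ (n - i) := by rw [f_mul]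

lemma mulpow_aeval (n : ℕ) (p : (Polynomial K)) (hn : p.natDegree ≤ n) :
    (1 + X ^ 2 : PowerSeries K) ^ n * Polynomial.aeval f p
      = ((S n p : (Polynomial K)) : PowerSeries K) := by
  rw [Polynomial.aeval_eq_sum_range' (Nat.lt_succ_of_le hn), Finset.mul_sum]
  rw [S, ← Polynomial.coeToPowerSeries.ringHom_apply, map_sum]
  refine Finset.sum_congr rfl fun i hi => ?_
  rw [Finset.mem_range] at hi
  rw [PowerSeries.smul_eq_C_mul, mul_left_comm, pow_mul_f_pow n i (by omega)]
  simp only [map_mul, map_pow, Polynomial.coeToPowerSeries.ringHom_apply, A, B,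
    Polynomial.coe_add, Polynomial.coe_one, Polynomial.coe_pow, Polynomial.coe_X,
    Polynomial.coe_C]
  ring

end IndepAux

open IndepAux in
/-- If `p, q` are polynomials over `ZMod 2` with `X·p(f) + (1+X)·q(f) = 0` in `(ZMod 2)⟦X⟧`,
then `p = 0` and `q = 0`. -/
theorem independence (p q : Polynomial (ZMod 2))
    (h : X * Polynomial.aeval f p + (1 + X) * Polynomial.aeval f q = 0) :
    p = 0 ∧ q = 0 := by
  set n := max p.natDegree q.natDegree with hn
  have hp : p.natDegree ≤ n := le_max_left _ _
  have hq : q.natDegree ≤ n := le_max_right _ _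
  have hmul : X * ((1 + X ^ 2 : PowerSeries K) ^ n * Polynomial.aeval f p)
      + (1 + X) * ((1 + X ^ 2) ^ n * Polynomial.aeval f q)
      = (1 + X ^ 2 : PowerSeries K) ^ n
        * (X * Polynomial.aeval f p + (1 + X) * Polynomial.aeval f q) := by ring
  rw [h, mul_zero, mulpow_aeval n p hp, mulpow_aeval n q hq] at hmul
  have hcast : ((Polynomial.X * S n p + (1 + Polynomial.X) * S n q : Polynomial K)
      : PowerSeries K) = ((0 : Polynomial K) : PowerSeries K) := by
    simpa [Polynomial.coe_add, Polynomial.coe_mul, Polynomial.coe_X, Polynomial.coe_one]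
      using hmul
  have hpoly : Polynomial.X * S n p + (1 + Polynomial.X) * S n q = 0 :=
    Polynomial.coe_injective _ hcast
  exact key n p q (fun i hi => Polynomial.coeff_eq_zero_of_natDegree_lt (lt_of_le_of_lt hp hi))
    (fun i hi => Polynomial.coeff_eq_zero_of_natDegree_lt (lt_of_le_of_lt hq hi)) hpoly

end
end

section
/- Let f = (1+X+X²)·(1+X²)⁻¹, u = X·(1+X+X²)⁻¹, v = (1+X)·(1+X+X²)⁻¹ in (ZMod 2)⟦X⟧, and let σ denote the coefficient shift on power series (coeff n (σ g) = coeff (n+1) g). Then for all polynomials p, q ∈ (ZMod 2)[Y]: σ( u·p(f) + v·q(f) ) = u·( p(f) + ψ_q(f) + q(0) ) + v·( p(f) + f·ψ_q(f) + f·q(1) + f·q(0) ), where q(0) and q(1) denote the evaluations of q at 0 and 1 in ZMod 2 (viewed as elements of (ZMod 2)⟦X⟧), and p(f), q(f), ψ_q(f) denote evaluations of polynomials at the power series f. -/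
open PowerSeries

noncomputable section

/-- `u = X·(1+X+X²)⁻¹`, the translation part of `x`. -/
def u : PowerSeries (ZMod 2) := X * (1 + X + X ^ 2)⁻¹

/-- `v = (1+X)·(1+X+X²)⁻¹`, the translation part of `z`. -/
def v : PowerSeries (ZMod 2) := (1 + X) * (1 + X + X ^ 2)⁻¹

/-- The coefficient shift `σ` on power series: `coeff n (σ g) = coeff (n+1) g`. -/
def shift (g : PowerSeries (ZMod 2)) : PowerSeries (ZMod 2) :=
  PowerSeries.mk fun n => coeff (R := ZMod 2) (n + 1) g

/-- `φ_0 = 0` and `φ_n = ∑_{i=1}^n Yⁱ` for `n ≥ 1`, in `(ZMod 2)[Y]`. -/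
def phi (n : ℕ) : Polynomial (ZMod 2) := ∑ i ∈ Finset.Icc 1 n, Polynomial.X ^ i

/-- For `q = ∑_{i=0}^n c_i Yⁱ` in `(ZMod 2)[Y]` (with `n` the degree of `q`),
`ψ_q = ∑_{i=1}^n c_i φ_{i-1}`. -/
def psi (q : Polynomial (ZMod 2)) : Polynomial (ZMod 2) :=
  ∑ i ∈ Finset.Icc 1 q.natDegree, Polynomial.C (q.coeff i) * phi (i - 1)

end
noncomputable section Aux
abbrev R2 := PowerSeries (ZMod 2)
abbrev A : R2 := 1 + X + X ^ 2
abbrev B : R2 := 1 + X ^ 2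

lemma hcA : constantCoeff (R := ZMod 2) A = 1 := by simp
lemma hcB : constantCoeff (R := ZMod 2) B = 1 := by simp
lemma hAinv : A * A⁻¹ = 1 := PowerSeries.mul_inv_cancel _ (by rw [hcA]; exact one_ne_zero)
lemma hBinv : B * B⁻¹ = 1 := PowerSeries.mul_inv_cancel _ (by rw [hcB]; exact one_ne_zero)
lemma htwo : (2 : R2) = 0 := by
  have h1 : ((C (R := ZMod 2)) 2 : R2) = 2 := map_ofNat _ 2
  rw [← h1, show (2:ZMod 2) = 0 from rfl, map_zero]
lemma hu : u * A = X := by rw [u, mul_assoc, mul_comm _ A, hAinv, mul_one]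
lemma hv : v * A = 1 + X := by rw [v, mul_assoc, mul_comm _ A, hAinv, mul_one]
lemma hf : f * B = A := by rw [f, mul_assoc, mul_comm _ B, hBinv, mul_one]
lemma hAne : (A : R2) ≠ 0 := fun h => by simpa [h] using hcA
lemma hBne : (B : R2) ≠ 0 := fun h => by simpa [h] using hcB
lemma hABne : (A * B : R2) ≠ 0 := mul_ne_zero hAne hBne

lemma hg : f = 1 + X * (1 + X ^ 2)⁻¹ := by
  apply mul_left_cancel₀ hBne
  linear_combination hf + X*hBinv + (X - X*B*B⁻¹)*htwo

lemma hI : X * u + X * v = u := by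
  apply mul_left_cancel₀ hAne
  linear_combination X*hu + X*hv - hu + X^2*htwo

lemma hiii : X * u + X * v * f = v * (X * (1 + X ^ 2)⁻¹) := by
  apply mul_left_cancel₀ hABne
  linear_combination (X*B)*hu + (X*v*A)*hf + (X*A)*hv - (v*A*X)*hBinv - X*hv + (X^2+X^3+X^4)*htwo

lemma hbase : v * f = X * v * f + 1 := by
  apply mul_left_cancel₀ hABne
  linear_combination (f*B)*hv + (1+X)*hf - (X*f*B)*hv - X*(1+X)*hf - (X^2+X^3+X^4)*htwo

lemma phi_zero : phi 0 = 0 := by simp [phi]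
lemma phi_succ (n : ℕ) : phi (n+1) = phi n + Polynomial.X ^ (n+1) := by
  rw [phi, phi, ← Finset.insert_Icc_right_eq_Icc_add_one (by omega), Finset.sum_insert (by simp)]
  ring

lemma keyPhi (n : ℕ) : v * f ^ (n+1) =
    X * u * Polynomial.aeval f (phi n) +
    X * v * (f * Polynomial.aeval f (phi n) + f) + 1 := by
  induction n with
  | zero =>
    simp only [phi_zero, map_zero, pow_one, mul_zero, zero_add]
    linear_combination hbase
  | succ n ih =>
    rw [phi_succ, map_add, map_pow, Polynomial.aeval_X]
    linear_combination ih + f^(n+1)*hiii + v*f^(n+1)*hg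
      - (X*u*f^(n+1) + X*v*f^(n+2) - v*X*(1+X^2)⁻¹*f^(n+1))*htwo

lemma keyMon (n : ℕ) : v * f ^ n =
    X * u * (Polynomial.aeval f (phi (n-1)) + C (R := ZMod 2) ((0:ZMod 2) ^ n)) +
    X * v * (f * Polynomial.aeval f (phi (n-1)) + f * 1 + f * C (R := ZMod 2) ((0:ZMod 2) ^ n)) + 1 := by
  cases n with
  | zero =>
    simp only [Nat.zero_sub, phi_zero, map_zero, pow_zero, map_one, mul_one, zero_add, mul_zero]
    apply mul_left_cancel₀ hABne
    linear_combination B*hv - (X*B)*hu - (2*X*v*A)*hf + (X*v*A^2 - (1+X)*B)*htwo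
      + (1 + X + X^3 - X^4 - 2*X*v - 4*X^2*v - 6*X^3*v - 4*X^4*v - 2*X^5*v)*htwo
  | succ n =>
    simp only [Nat.succ_sub_one, zero_pow (Nat.succ_ne_zero n), map_zero, add_zero,
      mul_one, mul_zero]
    linear_combination keyPhi n
end Aux

noncomputable section Aux2

lemma psi_eq (q : Polynomial (ZMod 2)) (N : ℕ) (h : q.natDegree < N) :
    psi q = ∑ i ∈ Finset.range N, Polynomial.C (q.coeff i) * phi (i - 1) := by
  rw [psi]
  apply Finset.sum_subset
  · intro i hi
    simp only [Finset.mem_Icc] at hi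
    simp only [Finset.mem_range]
    omega
  · intro i hi hni
    simp only [Finset.mem_Icc, not_and, not_le] at hni
    rcases Nat.eq_zero_or_pos i with h0 | h1
    · subst h0; simp [phi_zero]
    · have hd : q.natDegree < i := hni h1
      rw [Polynomial.coeff_eq_zero_of_natDegree_lt hd, map_zero, zero_mul]

lemma psi_add (q r : Polynomial (ZMod 2)) : psi (q + r) = psi q + psi r := by
  set N := max (q+r).natDegree (max q.natDegree r.natDegree) + 1 with hN
  rw [psi_eq (q+r) N (by omega), psi_eq q N (by omega), psi_eq r N (by omega),
    ← Finset.sum_add_distrib]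
  apply Finset.sum_congr rfl
  intro i _
  rw [Polynomial.coeff_add, map_add, add_mul]

lemma psi_monomial (n : ℕ) (c : ZMod 2) :
    psi (Polynomial.monomial n c) = Polynomial.C c * phi (n - 1) := by
  by_cases hc : c = 0
  · subst hc; simp [psi]
  · rw [psi_eq _ (n+1) (by simpa using Nat.lt_succ_of_le (Polynomial.natDegree_monomial_le c))]
    rw [Finset.sum_eq_single n]
    · rw [Polynomial.coeff_monomial, if_pos rfl]
    · intro i _ hin
      rw [Polynomial.coeff_monomial, if_neg (by omega), map_zero, zero_mul]
    · intro hn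
      exact absurd (Finset.self_mem_range_succ n) hn

lemma keyQ (q : Polynomial (ZMod 2)) : v * Polynomial.aeval f q =
    X * u * (Polynomial.aeval f (psi q) + C (R := ZMod 2) (q.eval 0)) +
    X * v * (f * Polynomial.aeval f (psi q) + f * C (R := ZMod 2) (q.eval 1) +
      f * C (R := ZMod 2) (q.eval 0)) + C (R := ZMod 2) (q.eval 1) := by
  induction q using Polynomial.induction_on' with
  | add q r hq hr =>
    simp only [map_add, psi_add, Polynomial.eval_add]
    linear_combination hq + hr
  | monomial n c =>
    rcases (show ∀ c : ZMod 2, c = 0 ∨ c = 1 by decide) c with rfl | rfl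
    · simp [psi_monomial, psi, phi]
    · rw [psi_monomial]
      simp only [Polynomial.C_1, one_mul, Polynomial.aeval_monomial, map_one,
        Polynomial.eval_monomial, one_pow, mul_one]
      linear_combination keyMon n

lemma X_mul_shift (g : R2) :
    X * shift g = g - C (R := ZMod 2) (constantCoeff (R := ZMod 2) g) := by
  ext n
  cases n with
  | zero =>
    simp [shift, coeff_zero_eq_constantCoeff]
  | succ n =>
    simp [shift, coeff_succ_X_mul, PowerSeries.coeff_C, coeff_mk]

lemma shift_eq (g h : R2)
    (H : X * h + C (R := ZMod 2) (constantCoeff (R := ZMod 2) g) = g) : shift g = h := by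
  have h1 := X_mul_shift g
  have h2 : X * shift g = X * h := by rw [h1]; linear_combination -H
  exact mul_left_cancel₀ PowerSeries.X_ne_zero h2

lemma hcf : constantCoeff (R := ZMod 2) f = 1 := by
  have h := congrArg (constantCoeff (R := ZMod 2)) hf
  rw [map_mul, hcB, hcA, mul_one] at h
  exact h

lemma hcu : constantCoeff (R := ZMod 2) u = 0 := by
  have h := congrArg (constantCoeff (R := ZMod 2)) hu
  rw [map_mul, hcA, mul_one, constantCoeff_X] at h
  exact h

lemma hcv : constantCoeff (R := ZMod 2) v = 1 := by
  have h := congrArg (constantCoeff (R := ZMod 2)) hv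
  rw [map_mul, hcA, mul_one, map_add, constantCoeff_one, constantCoeff_X, add_zero] at h
  exact h

lemma hcaeval (q : Polynomial (ZMod 2)) :
    constantCoeff (R := ZMod 2) (Polynomial.aeval f q) = q.eval 1 := by
  rw [Polynomial.aeval_def, Polynomial.hom_eval₂]
  have hcomp : (constantCoeff (R := ZMod 2)).comp (algebraMap (ZMod 2) R2) = RingHom.id _ := by
    ext x
    simp [PowerSeries.algebraMap_apply]
  rw [hcomp, hcf]
  exact Polynomial.eval₂_at_one (RingHom.id (ZMod 2)) |>.trans rfl


/-- Section formula for `x^{p(a)} z^{q(a)}` in power-series form: for all polynomials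
`p, q` over `ZMod 2`,
`σ(u·p(f) + v·q(f)) = u·(p(f) + ψ_q(f) + q(0)) + v·(p(f) + f·ψ_q(f) + f·q(1) + f·q(0))`. -/
theorem shift_section (p q : Polynomial (ZMod 2)) :
    shift (u * Polynomial.aeval f p + v * Polynomial.aeval f q) =
      u * (Polynomial.aeval f p + Polynomial.aeval f (psi q) + C (R := ZMod 2) (q.eval 0)) +
      v * (Polynomial.aeval f p + f * Polynomial.aeval f (psi q) +
        f * C (R := ZMod 2) (q.eval 1) + f * C (R := ZMod 2) (q.eval 0)) := by
  apply shift_eq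
  have hc0 : constantCoeff (R := ZMod 2) (u * Polynomial.aeval f p + v * Polynomial.aeval f q)
      = q.eval 1 := by
    rw [map_add, map_mul, map_mul, hcu, hcv, hcaeval, hcaeval, zero_mul, one_mul, zero_add]
  rw [hc0]
  linear_combination (Polynomial.aeval f p) * hI - keyQ q

end Aux2
end
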